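/- Let n ≥ 4 and let A be a 3×n (−1,1)-matrix of rank 3 over ℚ. Then mper A ≤ mper D_{(n,3,2)}. For n ≥ 5, equality holds if and only if A can be obtained from D_{(n,3,2)} by permutations of rows and columns and multiplications of rows or columns by −1; for n = 4, equality holds if and only if A can be obtained in this way from D_{(4,3,2)} or from D_{(4,3,3)}. -/

import Mathlib

open Matrix

/-- The permanent of a square matrix. -/
def per {n : ℕ} (A : Matrix (Fin n) (Fin n) ℚ) : ℚ :=
  ∑ σ : Equiv.Perm (Fin n), ∏ i, A i (σ i)

/-- The rectangular matrix `D_{(n,k,l)}` (`k` rows, `n` columns): `-1` on the first `l`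
diagonal entries, `1` elsewhere. -/
def Dr (n k l : ℕ) : Matrix (Fin k) (Fin n) ℚ :=
  fun i j => if (i : ℕ) = (j : ℕ) ∧ (j : ℕ) < l then -1 else 1

/-- `A` is obtained from `B` by permutations of rows and columns and multiplications of
rows or columns by `-1` (rectangular case, no transposition). -/
def RectEquiv {k n : ℕ} (A B : Matrix (Fin k) (Fin n) ℚ) : Prop :=
  ∃ (ρ : Equiv.Perm (Fin k)) (σ : Equiv.Perm (Fin n)) (ε : Fin k → ℚ) (δ : Fin n → ℚ),
    (∀ i, ε i = 1 ∨ ε i = -1) ∧ (∀ j, δ j = 1 ∨ δ j = -1) ∧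
    ∀ i j, A i j = ε i * δ j * B (ρ i) (σ j)

/-- `mper A`: the sum of `|per B|` over all `k × k` submatrices `B` of a `k × n` matrix `A`
obtained by choosing `k` of the `n` columns (keeping their order). -/
def mper {k n : ℕ} (A : Matrix (Fin k) (Fin n) ℚ) : ℚ :=
  ∑ s ∈ (Finset.powersetCard k (Finset.univ : Finset (Fin n))).attach,
    |per (A.submatrix id (s.1.orderEmbOfFin (Finset.mem_powersetCard.mp s.2).2))|


lemma per3 (A : Matrix (Fin 3) (Fin 3) ℚ) :
    per A = A 0 0 * A 1 1 * A 2 2 + A 0 0 * A 1 2 * A 2 1 + A 0 1 * A 1 0 * A 2 2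
      + A 0 1 * A 1 2 * A 2 0 + A 0 2 * A 1 0 * A 2 1 + A 0 2 * A 1 1 * A 2 0 := by
  have h : (Finset.univ : Finset (Equiv.Perm (Fin 3))) =
      {Equiv.refl _, Equiv.swap 1 2, Equiv.swap 0 1,
       Equiv.swap 0 1 * Equiv.swap 1 2, Equiv.swap 1 2 * Equiv.swap 0 1, Equiv.swap 0 2} := by
    decide
  rw [per, h]
  rw [Finset.sum_insert (by decide), Finset.sum_insert (by decide), Finset.sum_insert (by decide),
    Finset.sum_insert (by decide), Finset.sum_insert (by decide), Finset.sum_singleton]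
  simp [Fin.prod_univ_three, Equiv.swap_apply_def, Equiv.Perm.mul_apply]
  ring


lemma per_perm {k : ℕ} (B : Matrix (Fin k) (Fin k) ℚ) (ρ π : Equiv.Perm (Fin k)) :
    per (B.submatrix ρ π) = per B := by
  unfold per
  have key : ∀ σ : Equiv.Perm (Fin k),
      ∏ i, (B.submatrix ρ π) i (σ i) = ∏ i, B i ((π * σ * ρ⁻¹) i) := by
    intro σ
    rw [← Equiv.prod_comp ρ (fun x => B x ((π * σ * ρ⁻¹) x))]
    apply Finset.prod_congr rfl
    intro i _
    simp [Matrix.submatrix, Equiv.Perm.mul_apply]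
  simp_rw [key]
  exact Fintype.sum_equiv ((Equiv.mulRight ρ⁻¹).trans (Equiv.mulLeft π))
    _ _ (fun σ => rfl)


lemma per_rowperm {k : ℕ} (B : Matrix (Fin k) (Fin k) ℚ) (ρ : Equiv.Perm (Fin k)) :
    per (B.submatrix ρ id) = per B := by
  have := per_perm B ρ (Equiv.refl _)
  simpa using this

lemma per_colperm {k : ℕ} (B : Matrix (Fin k) (Fin k) ℚ) (π : Equiv.Perm (Fin k)) :
    per (B.submatrix id π) = per B := by
  have := per_perm B (Equiv.refl _) π
  simpa using this

lemma per_scale {k : ℕ} (e d : Fin k → ℚ) (B : Matrix (Fin k) (Fin k) ℚ) :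
    per (fun i j => e i * d j * B i j) = (∏ i, e i) * (∏ j, d j) * per B := by
  unfold per
  rw [Finset.mul_sum]
  apply Finset.sum_congr rfl
  intro σ _
  have : ∀ i, e i * d (σ i) * B i (σ i) = e i * (d (σ i) * B i (σ i)) := by intro i; ring
  simp_rw [this]
  rw [Finset.prod_mul_distrib, Finset.prod_mul_distrib, Equiv.prod_comp σ d]
  ring

lemma abs_pm_prod {k : ℕ} (f : Fin k → ℚ) (hf : ∀ i, f i = 1 ∨ f i = -1) :
    |∏ i, f i| = 1 := by
  rw [Finset.abs_prod]
  rw [Finset.prod_eq_one]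
  intro i _
  rcases hf i with h | h <;> simp [h]

lemma mper_eq_sum {k n : ℕ} (A : Matrix (Fin k) (Fin n) ℚ) :
    mper A = ∑ s ∈ Finset.powersetCard k (Finset.univ : Finset (Fin n)),
      (if h : s.card = k then |per (A.submatrix id (s.orderEmbOfFin h))| else 0) := by
  rw [mper, ← Finset.sum_attach (Finset.powersetCard k Finset.univ)
    (fun s => if h : s.card = k then |per (A.submatrix id (s.orderEmbOfFin h))| else 0)]
  apply Finset.sum_congr rfl
  intro s _
  rw [dif_pos (Finset.mem_powersetCard.mp s.2).2]

lemma exists_perm_fin_comp {k n : ℕ} (σ : Equiv.Perm (Fin n)) (s : Finset (Fin n))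
    (h : s.card = k) (h' : (s.image σ).card = k) :
    ∃ π : Equiv.Perm (Fin k), ∀ t, σ (s.orderEmbOfFin h t) = (s.image σ).orderEmbOfFin h' (π t) := by
  have hf : ∀ t : Fin k, σ (s.orderEmbOfFin h t) ∈ s.image σ := by
    intro t
    exact Finset.mem_image_of_mem σ (Finset.orderEmbOfFin_mem s h t)
  let f : Fin k → {x // x ∈ s.image σ} := fun t => ⟨σ (s.orderEmbOfFin h t), hf t⟩
  have hinj : Function.Injective f := by
    intro a b hab
    have := congrArg Subtype.val hab
    simp only [f] at this
    exact (s.orderEmbOfFin h).injective (σ.injective this)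
  have hbij : Function.Bijective f := by
    rw [Fintype.bijective_iff_injective_and_card]
    refine ⟨hinj, ?_⟩
    simp only [Fintype.card_coe, Fintype.card_fin, h']
  refine ⟨(Equiv.ofBijective f hbij).trans ((s.image σ).orderIsoOfFin h').toEquiv.symm,
    fun t => ?_⟩
  have h2 : ((s.image σ).orderIsoOfFin h')
      (((s.image σ).orderIsoOfFin h').toEquiv.symm (Equiv.ofBijective f hbij t)) = f t := by
    exact ((s.image σ).orderIsoOfFin h').apply_symm_apply (f t)
  calc σ (s.orderEmbOfFin h t) = ↑(f t) := rfl
    _ = ↑(((s.image σ).orderIsoOfFin h')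
        (((s.image σ).orderIsoOfFin h').toEquiv.symm (Equiv.ofBijective f hbij t))) := by
        rw [h2]
    _ = (s.image σ).orderEmbOfFin h'
        (((Equiv.ofBijective f hbij).trans ((s.image σ).orderIsoOfFin h').toEquiv.symm) t) := by
        rw [Finset.coe_orderIsoOfFin_apply]
        rfl

lemma mper_rectequiv {k n : ℕ} (A B : Matrix (Fin k) (Fin n) ℚ)
    (ρ : Equiv.Perm (Fin k)) (σ : Equiv.Perm (Fin n)) (ε : Fin k → ℚ) (δ : Fin n → ℚ)
    (hε : ∀ i, ε i = 1 ∨ ε i = -1) (hδ : ∀ j, δ j = 1 ∨ δ j = -1)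
    (hAB : ∀ i j, A i j = ε i * δ j * B (ρ i) (σ j)) :
    mper A = mper B := by
  rw [mper_eq_sum, mper_eq_sum]
  apply Finset.sum_nbij' (i := fun s => s.image σ) (j := fun s => s.image σ.symm)
  · intro s hs
    rw [Finset.mem_powersetCard_univ] at hs ⊢
    rw [Finset.card_image_of_injective _ σ.injective, hs]
  · intro s hs
    rw [Finset.mem_powersetCard_univ] at hs ⊢
    rw [Finset.card_image_of_injective _ σ.symm.injective, hs]
  · intro s _
    rw [Finset.image_image]
    simp
  · intro s _
    rw [Finset.image_image]
    simp
  · intro s hs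
    rw [Finset.mem_powersetCard_univ] at hs
    have h' : (s.image σ).card = k := by
      rw [Finset.card_image_of_injective _ σ.injective, hs]
    rw [dif_pos hs, dif_pos h']
    -- now the per computation
    obtain ⟨π, hπ⟩ := exists_perm_fin_comp σ s hs h'
    have hsub : A.submatrix id (s.orderEmbOfFin hs)
        = fun i t => ε i * δ (s.orderEmbOfFin hs t) *
            (((B.submatrix id ((s.image σ).orderEmbOfFin h')).submatrix id π).submatrix ρ (Equiv.refl _)) i t := by
      funext i t
      simp [Matrix.submatrix, hAB, ← hπ t]
    have hsub2 : (((B.submatrix id ((s.image σ).orderEmbOfFin h')).submatrix id π).submatrix ρ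
        (Equiv.refl (Fin k))) = (((B.submatrix id ((s.image σ).orderEmbOfFin h')).submatrix
        (id : Fin k → Fin k) π).submatrix ρ (id : Fin k → Fin k)) := rfl
    rw [hsub, hsub2, per_scale, per_rowperm, per_colperm]
    rw [abs_mul, abs_mul, abs_pm_prod _ hε, abs_pm_prod _ (fun t => hδ _), one_mul, one_mul]

def tau (c : Fin 3 → ℚ) : Bool × Bool := (decide (c 1 = c 0), decide (c 2 = c 0))

def Sim (c d : Fin 3 → ℚ) : Prop := (∀ i, c i = d i) ∨ (∀ i, c i = -d i)

lemma sim_refl (c : Fin 3 → ℚ) : Sim c c := Or.inl fun _ => rfl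

lemma forall_fin3 (P : Fin 3 → Prop) : (∀ i, P i) ↔ (P 0 ∧ P 1 ∧ P 2) := by
  constructor
  · intro h; exact ⟨h 0, h 1, h 2⟩
  · rintro ⟨a, b, c⟩ i; fin_cases i <;> assumption

set_option maxHeartbeats 1000000 in
lemma tau_eq_iff (c d : Fin 3 → ℚ) (hc : ∀ i, c i = 1 ∨ c i = -1)
    (hd : ∀ i, d i = 1 ∨ d i = -1) : tau c = tau d ↔ Sim c d := by
  rcases hc 0 with h0|h0 <;> rcases hc 1 with h1|h1 <;> rcases hc 2 with h2|h2 <;>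
  rcases hd 0 with g0|g0 <;> rcases hd 1 with g1|g1 <;> rcases hd 2 with g2|g2 <;>
  · simp only [tau, Sim, forall_fin3, h0, h1, h2, g0, g1, g2]
    norm_num

lemma minority (w : Fin 3 → ℚ) (hw : ∀ i, w i = 1 ∨ w i = -1)
    (h1 : ¬ ∀ i, w i = 1) (h2 : ¬ ∀ i, w i = -1) :
    ∃ (r : Fin 3) (η : ℚ), (η = 1 ∨ η = -1) ∧ ∀ i, w i = η * (if i = r then -1 else 1) := by
  rcases hw 0 with h0|h0 <;> rcases hw 1 with g1|g1 <;> rcases hw 2 with g2|g2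
  · exact absurd (by rw [forall_fin3]; exact ⟨h0, g1, g2⟩) h1
  · refine ⟨2, 1, Or.inl rfl, ?_⟩; intro i; fin_cases i <;> simp [h0, g1, g2]
  · refine ⟨1, 1, Or.inl rfl, ?_⟩; intro i; fin_cases i <;> simp [h0, g1, g2]
  · refine ⟨0, -1, Or.inr rfl, ?_⟩; intro i; fin_cases i <;> simp [h0, g1, g2]
  · refine ⟨0, 1, Or.inl rfl, ?_⟩; intro i; fin_cases i <;> simp [h0, g1, g2]
  · refine ⟨1, -1, Or.inr rfl, ?_⟩; intro i; fin_cases i <;> simp [h0, g1, g2]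
  · refine ⟨2, -1, Or.inr rfl, ?_⟩; intro i; fin_cases i <;> simp [h0, g1, g2]
  · exact absurd (by rw [forall_fin3]; exact ⟨h0, g1, g2⟩) h2

lemma minority_of_not_sim (c d : Fin 3 → ℚ) (hc : ∀ i, c i = 1 ∨ c i = -1)
    (hd : ∀ i, d i = 1 ∨ d i = -1) (hns : ¬ Sim c d) :
    ∃ (r : Fin 3) (η : ℚ), (η = 1 ∨ η = -1) ∧
      ∀ i, c i = η * (if i = r then -1 else 1) * d i := by
  have hsq : ∀ i, d i * d i = 1 := by
    intro i; rcases hd i with h|h <;> rw [h] <;> norm_num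
  set w : Fin 3 → ℚ := fun i => c i * d i with hwdef
  have hw : ∀ i, w i = 1 ∨ w i = -1 := by
    intro i; rcases hc i with h|h <;> rcases hd i with g|g <;> simp [hwdef, h, g]
  have hcw : ∀ i, c i = w i * d i := by
    intro i
    simp only [hwdef]
    rw [mul_assoc, hsq i, mul_one]
  have hw1 : ¬ ∀ i, w i = 1 := by
    intro h; exact hns (Or.inl (fun i => by rw [hcw i, h i, one_mul]))
  have hw2 : ¬ ∀ i, w i = -1 := by
    intro h; exact hns (Or.inr (fun i => by rw [hcw i, h i]; ring))
  obtain ⟨r, η, hη, hrep⟩ := minority w hw hw1 hw2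
  exact ⟨r, η, hη, fun i => by rw [hcw i, hrep i]⟩

lemma minority_ne (c c' d : Fin 3 → ℚ) (hd : ∀ i, d i = 1 ∨ d i = -1)
    (r r' : Fin 3) (η η' : ℚ) (hη : η = 1 ∨ η = -1) (hη' : η' = 1 ∨ η' = -1)
    (hc : ∀ i, c i = η * (if i = r then -1 else 1) * d i)
    (hc' : ∀ i, c' i = η' * (if i = r' then -1 else 1) * d i)
    (hns : ¬ Sim c c') : r ≠ r' := by
  intro hrr
  subst hrr
  apply hns
  have key : ∀ i, c i = (η * η') * c' i := by
    intro i
    rw [hc i, hc' i]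
    rcases hη' with h|h <;> rw [h] <;> ring
  rcases hη with h|h <;> rcases hη' with h'|h'
  · exact Or.inl fun i => by rw [key i, h, h']; ring
  · exact Or.inr fun i => by rw [key i, h, h']; ring
  · exact Or.inr fun i => by rw [key i, h, h']; ring
  · exact Or.inl fun i => by rw [key i, h, h']; ring

lemma exchoose2 {α : Type*} [DecidableEq α] (a b x y : α) (hab : a ≠ b) (hxy : x ≠ y) :
    ∃ π : Equiv.Perm α, π a = x ∧ π b = y := by
  refine ⟨(Equiv.swap (Equiv.swap a x b) y) * Equiv.swap a x, ?_, ?_⟩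
  · have hc : x ≠ Equiv.swap a x b := by
      intro h
      have := (Equiv.swap a x).injective ((Equiv.swap_apply_left a x).trans h)
      exact hab this
    simp only [Equiv.Perm.mul_apply, Equiv.swap_apply_left]
    exact Equiv.swap_apply_of_ne_of_ne hc hxy
  · simp only [Equiv.Perm.mul_apply, Equiv.swap_apply_left]

lemma exchoose3 {α : Type*} [DecidableEq α] (a b c x y z : α)
    (hab : a ≠ b) (hac : a ≠ c) (hbc : b ≠ c)
    (hxy : x ≠ y) (hxz : x ≠ z) (hyz : y ≠ z) :
    ∃ π : Equiv.Perm α, π a = x ∧ π b = y ∧ π c = z := by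
  obtain ⟨π', h1, h2⟩ := exchoose2 a b x y hab hxy
  have hdx : π' c ≠ x := fun h => hac (π'.injective (h.trans h1.symm)).symm
  have hdy : π' c ≠ y := fun h => hbc (π'.injective (h.trans h2.symm)).symm
  refine ⟨Equiv.swap (π' c) z * π', ?_, ?_, ?_⟩
  · simp only [Equiv.Perm.mul_apply, h1]
    exact Equiv.swap_apply_of_ne_of_ne (Ne.symm hdx) hxz
  · simp only [Equiv.Perm.mul_apply, h2]
    exact Equiv.swap_apply_of_ne_of_ne (Ne.symm hdy) hyz
  · simp only [Equiv.Perm.mul_apply, Equiv.swap_apply_left]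

def V (b : Bool × Bool) : Fin 3 → ℚ := ![1, if b.1 then 1 else -1, if b.2 then 1 else -1]

lemma colrep (c : Fin 3 → ℚ) (hc : ∀ i, c i = 1 ∨ c i = -1) :
    ∀ i, c i = c 0 * V (tau c) i := by
  rcases hc 0 with h0|h0 <;> rcases hc 1 with h1|h1 <;> rcases hc 2 with h2|h2 <;>
  · intro i; fin_cases i <;> simp [tau, V, h0, h1, h2] <;> norm_num

lemma rank_le_two_of_two_missing {n : ℕ} (A : Matrix (Fin 3) (Fin n) ℚ)
    (hA : ∀ i j, A i j = 1 ∨ A i j = -1) (b1 b2 : Bool × Bool) (hne : b1 ≠ b2)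
    (h1 : ∀ j, tau (fun i => A i j) ≠ b1) (h2 : ∀ j, tau (fun i => A i j) ≠ b2) :
    A.rank ≤ 2 := by
  have hcov : ∀ b1 b2 : Bool × Bool, b1 ≠ b2 → ∃ c1 c2 : Bool × Bool, c1 ≠ c2 ∧
      ∀ b : Bool × Bool, b = b1 ∨ b = b2 ∨ b = c1 ∨ b = c2 := by decide
  obtain ⟨c1, c2, -, hcover⟩ := hcov b1 b2 hne
  have hsub : Set.range Aᵀ ⊆ ↑(Submodule.span ℚ ({V c1, V c2} : Set (Fin 3 → ℚ))) := by
    rintro x ⟨j, rfl⟩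
    have hcol : ∀ i, Aᵀ j i = A 0 j * V (tau (fun i => A i j)) i :=
      colrep (fun i => A i j) (fun i => hA i j)
    have hAj : Aᵀ j = A 0 j • V (tau (fun i => A i j)) := by
      funext i; rw [Pi.smul_apply, smul_eq_mul]; exact hcol i
    rw [hAj]
    rcases hcover (tau (fun i => A i j)) with h|h|h|h
    · exact absurd h (h1 j)
    · exact absurd h (h2 j)
    · rw [h]
      exact Submodule.smul_mem _ _ (Submodule.subset_span (by simp))
    · rw [h]
      exact Submodule.smul_mem _ _ (Submodule.subset_span (by simp))
  have hr : A.rank = Module.finrank ℚ (LinearMap.range A.mulVecLin) := rfl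
  rw [hr, Matrix.range_mulVecLin]
  calc Module.finrank ℚ (Submodule.span ℚ (Set.range Aᵀ))
      ≤ Module.finrank ℚ (Submodule.span ℚ ({V c1, V c2} : Set (Fin 3 → ℚ))) :=
        Submodule.finrank_mono (Submodule.span_le.mpr hsub)
    _ ≤ 2 := by
        refine (finrank_span_le_card _).trans ?_
        rw [Set.toFinset_insert, Set.toFinset_singleton]
        exact (Finset.card_insert_le _ _).trans (by simp)

set_option maxHeartbeats 2000000 in
lemma perK (B : Matrix (Fin 3) (Fin 3) ℚ) (hB : ∀ i j, B i j = 1 ∨ B i j = -1) :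
    |per B| = if tau (fun i => B i 0) = tau (fun i => B i 1)
        ∧ tau (fun i => B i 1) = tau (fun i => B i 2) then 6 else 2 := by
  rcases hB 0 0 with h00|h00 <;> rcases hB 0 1 with h01|h01 <;> rcases hB 0 2 with h02|h02 <;>
  rcases hB 1 0 with h10|h10 <;> rcases hB 1 1 with h11|h11 <;> rcases hB 1 2 with h12|h12 <;>
  rcases hB 2 0 with h20|h20 <;> rcases hB 2 1 with h21|h21 <;> rcases hB 2 2 with h22|h22 <;>
  · rw [per3]
    simp only [h00,h01,h02,h10,h11,h12,h20,h21,h22, tau]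
    norm_num

lemma pascal3 (m : ℕ) : (m + 1).choose 3 = m.choose 2 + m.choose 3 :=
  Nat.choose_succ_succ m 2

lemma nat_ineq : ∀ (y x : ℕ), 1 ≤ x → 1 ≤ y →
    x.choose 3 + y.choose 3 ≤ (x + y - 1).choose 3 := by
  intro y
  induction y with
  | zero => intro x hx hy; omega
  | succ m ih =>
    intro x hx hy
    rcases Nat.eq_or_lt_of_le hy with h|h
    · have hm0 : m = 0 := by omega
      subst hm0
      have h13 : Nat.choose 1 3 = 0 := rfl
      have hx1 : x + 1 - 1 = x := by omega
      rw [hx1, h13]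
      omega
    · have hm : 1 ≤ m := by omega
      have h1 := ih x hx hm
      have h2 : (m : ℕ).choose 2 ≤ (x + m - 1).choose 2 :=
        Nat.choose_le_choose 2 (by omega)
      have hstep : x + (m + 1) - 1 = (x + m - 1) + 1 := by omega
      rw [hstep, pascal3, pascal3]
      omega

lemma nat_strict : ∀ (y x : ℕ), 2 ≤ x → 2 ≤ y →
    x.choose 3 + y.choose 3 < (x + y - 1).choose 3 := by
  intro y
  induction y with
  | zero => intro x hx hy; omega
  | succ m ih =>
    intro x hx hy
    rcases Nat.eq_or_lt_of_le hy with h|h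
    · have hm0 : m = 1 := by omega
      subst hm0
      show x.choose 3 + Nat.choose 2 3 < (x + 2 - 1).choose 3
      have h23 : Nat.choose 2 3 = 0 := rfl
      have hx1 : x + 2 - 1 = x + 1 := by omega
      have hpos : 0 < x.choose 2 := Nat.choose_pos (by omega)
      rw [hx1, h23, pascal3]
      omega
    · have hm : 2 ≤ m := by omega
      have h1 := ih x hx hm
      have h2 : (m : ℕ).choose 2 ≤ (x + m - 1).choose 2 :=
        Nat.choose_le_choose 2 (by omega)
      have hstep : x + (m + 1) - 1 = (x + m - 1) + 1 := by omega
      rw [hstep, pascal3, pascal3]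
      omega

lemma sumChooseLe (a b c d n : ℕ) (ha : 0 < a) (hb : 0 < b) (hc : 0 < c)
    (hs : a + b + c + d = n) (hn : 4 ≤ n) :
    a.choose 3 + b.choose 3 + c.choose 3 + d.choose 3 ≤ (n - 2).choose 3 := by
  have h1 := nat_ineq b a ha hb
  have h2 := nat_ineq c (a + b - 1) (by omega) hc
  have h3 : a + b - 1 + c - 1 = a + b + c - 2 := by omega
  rw [h3] at h2
  rcases Nat.eq_zero_or_pos d with hd|hd
  · have : a + b + c - 2 = n - 2 := by omega
    rw [this] at h2
    simp [hd]
    omega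
  · have h4 := nat_ineq d (a + b + c - 2) (by omega) hd
    have h5 : a + b + c - 2 + d - 1 = n - 3 := by omega
    rw [h5] at h4
    have h6 : (n - 3).choose 3 ≤ (n - 2).choose 3 := Nat.choose_le_choose 3 (by omega)
    omega

lemma sumChooseEq (a b c d n : ℕ) (ha : 0 < a) (hb : 0 < b) (hc : 0 < c)
    (hs : a + b + c + d = n) (hn : 5 ≤ n)
    (heq : a.choose 3 + b.choose 3 + c.choose 3 + d.choose 3 = (n - 2).choose 3) :
    d = 0 ∧ ((a = 1 ∧ b = 1) ∨ (a = 1 ∧ c = 1) ∨ (b = 1 ∧ c = 1)) := by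
  have hd : d = 0 := by
    by_contra hd0
    have hd : 0 < d := by omega
    have h1 := nat_ineq b a ha hb
    have h2 := nat_ineq c (a + b - 1) (by omega) hc
    have h3 : a + b - 1 + c - 1 = a + b + c - 2 := by omega
    rw [h3] at h2
    have h4 := nat_ineq d (a + b + c - 2) (by omega) hd
    have h5 : a + b + c - 2 + d - 1 = n - 3 := by omega
    rw [h5] at h4
    have h6 : (n - 3).choose 3 < (n - 2).choose 3 := by
      have : n - 2 = (n - 3) + 1 := by omega
      rw [this, pascal3]
      have : 0 < (n - 3).choose 2 := Nat.choose_pos (by omega)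
      omega
    omega
  subst hd
  refine ⟨rfl, ?_⟩
  simp only [Nat.choose_zero_succ, add_zero] at heq hs
  -- now a + b + c = n, choose-sum equality
  have pair : ∀ x y z : ℕ, 0 < x → 0 < y → 0 < z → x + y + z = n →
      x.choose 3 + y.choose 3 + z.choose 3 = (n - 2).choose 3 → x = 1 ∨ y = 1 := by
    intro x y z hx hy hz hsum he
    by_contra hcon
    push_neg at hcon
    have hx2 : 2 ≤ x := by omega
    have hy2 : 2 ≤ y := by omega
    have h1 := nat_strict y x hx2 hy2
    have h2 := nat_ineq z (x + y - 1) (by omega) hz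
    have h3 : x + y - 1 + z - 1 = n - 2 := by omega
    rw [h3] at h2
    omega
  have p1 := pair a b c ha hb hc (by omega) (by omega)
  have p2 := pair a c b ha hc hb (by omega) (by omega)
  have p3 := pair b c a hb hc ha (by omega) (by omega)
  omega


def ctau {n : ℕ} (A : Matrix (Fin 3) (Fin n) ℚ) (j : Fin n) : Bool × Bool :=
  tau (fun i => A i j)

def cnt {n : ℕ} (A : Matrix (Fin 3) (Fin n) ℚ) (b : Bool × Bool) : ℕ :=
  (Finset.univ.filter (fun j => ctau A j = b)).card

lemma cnt_sum {n : ℕ} (A : Matrix (Fin 3) (Fin n) ℚ) :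
    ∑ b : Bool × Bool, cnt A b = n := by
  classical
  have h := Finset.card_eq_sum_card_fiberwise
    (f := ctau A) (s := (Finset.univ : Finset (Fin n)))
    (t := (Finset.univ : Finset (Bool × Bool))) (fun j _ => Finset.mem_univ _)
  simp only [Finset.card_univ, Fintype.card_fin] at h
  exact h.symm

lemma cnt_pos {n : ℕ} (A : Matrix (Fin 3) (Fin n) ℚ) (j : Fin n) :
    0 < cnt A (ctau A j) :=
  Finset.card_pos.mpr ⟨j, Finset.mem_filter.mpr ⟨Finset.mem_univ _, rfl⟩⟩

lemma abs_per_submatrix {n : ℕ} (A : Matrix (Fin 3) (Fin n) ℚ)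
    (hA : ∀ i j, A i j = 1 ∨ A i j = -1) (s : Finset (Fin n)) (h : s.card = 3) :
    |per (A.submatrix id (s.orderEmbOfFin h))| =
      if ∃ b, ∀ j ∈ s, ctau A j = b then 6 else 2 := by
  rw [perK (A.submatrix id (s.orderEmbOfFin h)) (fun i t => hA i _)]
  have hiff : (tau (fun i => (A.submatrix id (s.orderEmbOfFin h)) i 0) =
        tau (fun i => (A.submatrix id (s.orderEmbOfFin h)) i 1) ∧
      tau (fun i => (A.submatrix id (s.orderEmbOfFin h)) i 1) =
        tau (fun i => (A.submatrix id (s.orderEmbOfFin h)) i 2)) ↔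
      (∃ b, ∀ j ∈ s, ctau A j = b) := by
    show (ctau A (s.orderEmbOfFin h 0) = ctau A (s.orderEmbOfFin h 1) ∧
        ctau A (s.orderEmbOfFin h 1) = ctau A (s.orderEmbOfFin h 2)) ↔ _
    constructor
    · rintro ⟨h1, h2⟩
      refine ⟨ctau A (s.orderEmbOfFin h 0), fun j hj => ?_⟩
      have : j ∈ Set.range (s.orderEmbOfFin h) := by
        rw [Finset.range_orderEmbOfFin]; exact hj
      obtain ⟨t, rfl⟩ := this
      fin_cases t
      · rfl
      · exact h1.symm
      · exact (h1.trans h2).symm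
    · rintro ⟨b, hb⟩
      rw [hb _ (Finset.orderEmbOfFin_mem s h 0), hb _ (Finset.orderEmbOfFin_mem s h 1),
        hb _ (Finset.orderEmbOfFin_mem s h 2)]
      exact ⟨rfl, rfl⟩
  rw [if_congr hiff rfl rfl]

lemma filter_const_card {n : ℕ} (A : Matrix (Fin 3) (Fin n) ℚ) :
    ((Finset.powersetCard 3 (Finset.univ : Finset (Fin n))).filter
        (fun s => ∃ b, ∀ j ∈ s, ctau A j = b)).card
      = ∑ b : Bool × Bool, (cnt A b).choose 3 := by
  classical
  have heq : ((Finset.powersetCard 3 (Finset.univ : Finset (Fin n))).filter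
        (fun s => ∃ b, ∀ j ∈ s, ctau A j = b))
      = (Finset.univ : Finset (Bool × Bool)).biUnion
          (fun b => Finset.powersetCard 3 (Finset.univ.filter (fun j => ctau A j = b))) := by
    ext s
    simp only [Finset.mem_filter, Finset.mem_biUnion, Finset.mem_powersetCard,
      Finset.mem_powersetCard_univ, Finset.mem_univ, true_and]
    constructor
    · rintro ⟨⟨hsub0, hcard⟩, b, hb⟩
      exact ⟨b, fun j hj => Finset.mem_filter.mpr ⟨Finset.mem_univ _, hb j hj⟩, hcard⟩
    · rintro ⟨b, hsub, hcard⟩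
      exact ⟨⟨Finset.subset_univ s, hcard⟩, b, fun j hj => (Finset.mem_filter.mp (hsub hj)).2⟩
  rw [heq, Finset.card_biUnion]
  · apply Finset.sum_congr rfl
    intro b _
    rw [Finset.card_powersetCard]
    rfl
  · intro b _ b' _ hne
    rw [Function.onFun, Finset.disjoint_left]
    intro s hs hs'
    rw [Finset.mem_powersetCard] at hs hs'
    have hpos : 0 < s.card := by rw [hs.2]; norm_num
    obtain ⟨j, hj⟩ := Finset.card_pos.mp hpos
    have e1 := (Finset.mem_filter.mp (hs.1 hj)).2
    have e2 := (Finset.mem_filter.mp (hs'.1 hj)).2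
    exact hne (e1.symm.trans e2)

lemma mper_formula {n : ℕ} (A : Matrix (Fin 3) (Fin n) ℚ)
    (hA : ∀ i j, A i j = 1 ∨ A i j = -1) :
    mper A = 2 * (n.choose 3 : ℚ)
      + 4 * ((∑ b : Bool × Bool, (cnt A b).choose 3 : ℕ) : ℚ) := by
  classical
  rw [mper_eq_sum]
  have step1 : ∀ s ∈ Finset.powersetCard 3 (Finset.univ : Finset (Fin n)),
      (if h : s.card = 3 then |per (A.submatrix id (s.orderEmbOfFin h))| else 0)
        = if ∃ b, ∀ j ∈ s, ctau A j = b then (6 : ℚ) else 2 := by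
    intro s hs
    have hcard := (Finset.mem_powersetCard.mp hs).2
    rw [dif_pos hcard, abs_per_submatrix A hA s hcard]
  rw [Finset.sum_congr rfl step1]
  have step2 : ∀ s : Finset (Fin n),
      (if ∃ b, ∀ j ∈ s, ctau A j = b then (6 : ℚ) else 2)
        = 2 + (if ∃ b, ∀ j ∈ s, ctau A j = b then (4 : ℚ) else 0) := by
    intro s; split <;> norm_num
  simp_rw [step2]
  rw [Finset.sum_add_distrib, Finset.sum_const, ← Finset.sum_filter]
  rw [Finset.sum_const]
  rw [Finset.card_powersetCard, Finset.card_univ, Fintype.card_fin]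
  rw [nsmul_eq_mul, nsmul_eq_mul, filter_const_card A]
  push_cast
  ring


lemma Dr_pm (n k l : ℕ) : ∀ i j, Dr n k l i j = 1 ∨ Dr n k l i j = -1 := by
  intro i j
  unfold Dr
  split_ifs <;> simp

lemma ctau_Dr2 {n : ℕ} (j : Fin n) :
    ctau (Dr n 3 2) j = if (j : ℕ) = 0 then (false, false)
      else if (j : ℕ) = 1 then (false, true) else (true, true) := by
  by_cases h0 : (j : ℕ) = 0
  · simp [ctau, tau, Dr, h0]
    norm_num
  · by_cases h1 : (j : ℕ) = 1
    · simp [ctau, tau, Dr, h0, h1]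
      norm_num
    · have h2 : ¬ ((j : ℕ) < 2) := by omega
      simp [ctau, tau, Dr, h0, h1, h2]

lemma card_val_eq (n m : ℕ) (h : m < n) :
    (Finset.univ.filter fun j : Fin n => (j : ℕ) = m).card = 1 := by
  rw [Finset.card_eq_one]
  refine ⟨⟨m, h⟩, ?_⟩
  ext j
  simp [Fin.ext_iff]

lemma card_val_lt2 (n : ℕ) (h : 2 ≤ n) :
    (Finset.univ.filter fun j : Fin n => (j : ℕ) < 2).card = 2 := by
  have : (Finset.univ.filter fun j : Fin n => (j : ℕ) < 2)
      = {(⟨0, by omega⟩ : Fin n), ⟨1, by omega⟩} := by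
    ext j
    simp [Fin.ext_iff]
    omega
  rw [this]
  rw [Finset.card_insert_of_notMem (by simp [Fin.ext_iff]), Finset.card_singleton]

lemma cnt_Dr2_tt {n : ℕ} (hn : 4 ≤ n) : cnt (Dr n 3 2) (true, true) = n - 2 := by
  unfold cnt
  have hiff : ∀ j : Fin n, (ctau (Dr n 3 2) j = (true, true)) ↔ ¬ ((j : ℕ) < 2) := by
    intro j
    rw [ctau_Dr2]
    split_ifs with h0 h1 <;> simp <;> omega
  rw [Finset.filter_congr (fun j _ => hiff j)]
  have hsplit := Finset.card_filter_add_card_filter_not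
    (s := (Finset.univ : Finset (Fin n))) (p := fun j : Fin n => (j : ℕ) < 2)
  rw [card_val_lt2 n (by omega)] at hsplit
  rw [Finset.card_univ, Fintype.card_fin] at hsplit
  have hconv : (Finset.filter (fun a => ¬(fun j : Fin n => (j : ℕ) < 2) a) Finset.univ)
      = Finset.filter (fun j : Fin n => ¬ (j : ℕ) < 2) Finset.univ := rfl
  rw [hconv] at hsplit
  omega

lemma cnt_Dr2_ft {n : ℕ} (hn : 4 ≤ n) : cnt (Dr n 3 2) (false, true) = 1 := by
  unfold cnt
  have hiff : ∀ j : Fin n, (ctau (Dr n 3 2) j = (false, true)) ↔ (j : ℕ) = 1 := by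
    intro j
    rw [ctau_Dr2]
    split_ifs with h0 h1 <;> simp <;> omega
  rw [Finset.filter_congr (fun j _ => hiff j)]
  exact card_val_eq n 1 (by omega)

lemma cnt_Dr2_ff {n : ℕ} (hn : 4 ≤ n) : cnt (Dr n 3 2) (false, false) = 1 := by
  unfold cnt
  have hiff : ∀ j : Fin n, (ctau (Dr n 3 2) j = (false, false)) ↔ (j : ℕ) = 0 := by
    intro j
    rw [ctau_Dr2]
    split_ifs with h0 h1 <;> simp <;> omega
  rw [Finset.filter_congr (fun j _ => hiff j)]
  exact card_val_eq n 0 (by omega)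

lemma cnt_Dr2_tf {n : ℕ} : cnt (Dr n 3 2) (true, false) = 0 := by
  unfold cnt
  rw [Finset.card_eq_zero, Finset.filter_eq_empty_iff]
  intro j _
  rw [ctau_Dr2]
  split_ifs <;> simp

lemma sum_bb (f : Bool × Bool → ℕ) :
    ∑ b : Bool × Bool, f b = f (false, false) + f (false, true)
      + f (true, false) + f (true, true) := by
  rw [Fintype.sum_prod_type]
  simp [Fintype.sum_bool]
  ring

lemma mper_Dr2 {n : ℕ} (hn : 4 ≤ n) :
    mper (Dr n 3 2) = 2 * (n.choose 3 : ℚ) + 4 * ((n - 2).choose 3 : ℚ) := by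
  rw [mper_formula _ (Dr_pm n 3 2)]
  rw [sum_bb, cnt_Dr2_tt hn, cnt_Dr2_ft hn, cnt_Dr2_ff hn, cnt_Dr2_tf]
  norm_num [show Nat.choose 1 3 = 0 from rfl, show Nat.choose 0 3 = 0 from rfl]


lemma fin_ne_of_val {n : ℕ} (a b : Fin n) (h : (a : ℕ) ≠ (b : ℕ)) : a ≠ b :=
  fun he => h (by rw [he])

lemma construct_R2 {n : ℕ} (hn : 4 ≤ n) (A : Matrix (Fin 3) (Fin n) ℚ)
    (hA : ∀ i j, A i j = 1 ∨ A i j = -1) (p1 p2 j0 : Fin n)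
    (hp12 : p1 ≠ p2)
    (hgen : ∀ j, j ≠ p1 → j ≠ p2 → Sim (fun i => A i j) (fun i => A i j0))
    (h1 : ¬ Sim (fun i => A i p1) (fun i => A i j0))
    (h2 : ¬ Sim (fun i => A i p2) (fun i => A i j0))
    (h12 : ¬ Sim (fun i => A i p1) (fun i => A i p2)) :
    RectEquiv A (Dr n 3 2) := by
  have hε : ∀ i, A i j0 = 1 ∨ A i j0 = -1 := fun i => hA i j0
  obtain ⟨r1, η1, hη1, hw1⟩ := minority_of_not_sim _ _ (fun i => hA i p1) hε h1
  obtain ⟨r2, η2, hη2, hw2⟩ := minority_of_not_sim _ _ (fun i => hA i p2) hε h2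
  have hr : r1 ≠ r2 := minority_ne _ _ _ hε r1 r2 η1 η2 hη1 hη2 hw1 hw2 h12
  have h0n : (0 : ℕ) < n := by omega
  have h1n : (1 : ℕ) < n := by omega
  obtain ⟨σ, hσ1, hσ2⟩ := exchoose2 p1 p2 (⟨0, h0n⟩ : Fin n) ⟨1, h1n⟩ hp12
    (fin_ne_of_val _ _ (by simp))
  obtain ⟨ρ, hρ1, hρ2⟩ := exchoose2 r1 r2 (0 : Fin 3) 1 hr (by decide)
  refine ⟨ρ, σ, fun i => A i j0, fun j => if j = p1 then η1 else if j = p2 then η2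
    else A 0 j * A 0 j0, hε, ?_, ?_⟩
  · intro j
    beta_reduce
    split_ifs with hj1 hj2
    · exact hη1
    · exact hη2
    · rcases hA 0 j with h | h <;> rcases hA 0 j0 with g | g <;> rw [h, g] <;> norm_num
  · intro i j
    beta_reduce
    by_cases hj1 : j = p1
    · subst hj1
      rw [if_pos rfl]
      have hD : Dr n 3 2 (ρ i) (σ j) = if i = r1 then -1 else 1 := by
        rw [hσ1]
        by_cases hi : i = r1
        · subst hi
          rw [hρ1]
          simp [Dr]
        · have hne : ρ i ≠ 0 := fun h => hi (ρ.injective (h.trans hρ1.symm))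
          have hne' : ((ρ i : ℕ)) ≠ 0 := fun h => hne (Fin.ext (by simpa using h))
          simp [Dr, hne', hi]
      rw [hD, hw1 i]
      split_ifs <;> ring
    · by_cases hj2 : j = p2
      · subst hj2
        rw [if_neg hj1, if_pos rfl]
        have hD : Dr n 3 2 (ρ i) (σ j) = if i = r2 then -1 else 1 := by
          rw [hσ2]
          by_cases hi : i = r2
          · subst hi
            rw [hρ2]
            simp [Dr]
          · have hne : ρ i ≠ 1 := fun h => hi (ρ.injective (h.trans hρ2.symm))
            have hne' : ((ρ i : ℕ)) ≠ 1 := fun h => hne (Fin.ext (by simpa using h))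
            simp [Dr, hne', hi]
        rw [hD, hw2 i]
        split_ifs <;> ring
      · rw [if_neg hj1, if_neg hj2]
        have hs1 : σ j ≠ ⟨0, h0n⟩ := fun h => hj1 (σ.injective (h.trans hσ1.symm))
        have hs2 : σ j ≠ ⟨1, h1n⟩ := fun h => hj2 (σ.injective (h.trans hσ2.symm))
        have hv1 : ((σ j : ℕ)) ≠ 0 := fun h => hs1 (Fin.ext (by simpa using h))
        have hv2 : ((σ j : ℕ)) ≠ 1 := fun h => hs2 (Fin.ext (by simpa using h))
        have hD : Dr n 3 2 (ρ i) (σ j) = 1 := by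
          have : ¬ ((σ j : ℕ) < 2) := by omega
          simp [Dr, this]
        rw [hD]
        rcases hgen j hj1 hj2 with hsim | hsim
        · have e0 : A 0 j = A 0 j0 := hsim 0
          have hsi : A i j = A i j0 := hsim i
          rw [hsi, e0]
          rcases hε 0 with h | h <;> rw [h] <;> ring
        · have e0 : A 0 j = -A 0 j0 := hsim 0
          have hsi : A i j = -A i j0 := hsim i
          rw [hsi, e0]
          rcases hε 0 with h | h <;> rw [h] <;> ring

lemma construct_R3 {n : ℕ} (hn : 4 ≤ n) (A : Matrix (Fin 3) (Fin n) ℚ)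
    (hA : ∀ i j, A i j = 1 ∨ A i j = -1) (p1 p2 p3 j0 : Fin n)
    (hp12 : p1 ≠ p2) (hp13 : p1 ≠ p3) (hp23 : p2 ≠ p3)
    (hgen : ∀ j, j ≠ p1 → j ≠ p2 → j ≠ p3 → Sim (fun i => A i j) (fun i => A i j0))
    (h1 : ¬ Sim (fun i => A i p1) (fun i => A i j0))
    (h2 : ¬ Sim (fun i => A i p2) (fun i => A i j0))
    (h3 : ¬ Sim (fun i => A i p3) (fun i => A i j0))
    (h12 : ¬ Sim (fun i => A i p1) (fun i => A i p2))
    (h13 : ¬ Sim (fun i => A i p1) (fun i => A i p3))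
    (h23 : ¬ Sim (fun i => A i p2) (fun i => A i p3)) :
    RectEquiv A (Dr n 3 3) := by
  have hε : ∀ i, A i j0 = 1 ∨ A i j0 = -1 := fun i => hA i j0
  obtain ⟨r1, η1, hη1, hw1⟩ := minority_of_not_sim _ _ (fun i => hA i p1) hε h1
  obtain ⟨r2, η2, hη2, hw2⟩ := minority_of_not_sim _ _ (fun i => hA i p2) hε h2
  obtain ⟨r3, η3, hη3, hw3⟩ := minority_of_not_sim _ _ (fun i => hA i p3) hε h3
  have hr12 : r1 ≠ r2 := minority_ne _ _ _ hε r1 r2 η1 η2 hη1 hη2 hw1 hw2 h12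
  have hr13 : r1 ≠ r3 := minority_ne _ _ _ hε r1 r3 η1 η3 hη1 hη3 hw1 hw3 h13
  have hr23 : r2 ≠ r3 := minority_ne _ _ _ hε r2 r3 η2 η3 hη2 hη3 hw2 hw3 h23
  have h0n : (0 : ℕ) < n := by omega
  have h1n : (1 : ℕ) < n := by omega
  have h2n : (2 : ℕ) < n := by omega
  obtain ⟨σ, hσ1, hσ2, hσ3⟩ := exchoose3 p1 p2 p3 (⟨0, h0n⟩ : Fin n) ⟨1, h1n⟩ ⟨2, h2n⟩
    hp12 hp13 hp23 (fin_ne_of_val _ _ (by simp)) (fin_ne_of_val _ _ (by simp))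
    (fin_ne_of_val _ _ (by simp))
  obtain ⟨ρ, hρ1, hρ2, hρ3⟩ := exchoose3 r1 r2 r3 (0 : Fin 3) 1 2 hr12 hr13 hr23
    (by decide) (by decide) (by decide)
  refine ⟨ρ, σ, fun i => A i j0, fun j => if j = p1 then η1 else if j = p2 then η2
    else if j = p3 then η3 else A 0 j * A 0 j0, hε, ?_, ?_⟩
  · intro j
    beta_reduce
    split_ifs with hj1 hj2 hj3
    · exact hη1
    · exact hη2
    · exact hη3
    · rcases hA 0 j with h | h <;> rcases hA 0 j0 with g | g <;> rw [h, g] <;> norm_num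
  · intro i j
    beta_reduce
    by_cases hj1 : j = p1
    · subst hj1
      rw [if_pos rfl]
      have hD : Dr n 3 3 (ρ i) (σ j) = if i = r1 then -1 else 1 := by
        rw [hσ1]
        by_cases hi : i = r1
        · subst hi
          rw [hρ1]
          simp [Dr]
        · have hne : ρ i ≠ 0 := fun h => hi (ρ.injective (h.trans hρ1.symm))
          have hne' : ((ρ i : ℕ)) ≠ 0 := fun h => hne (Fin.ext (by simpa using h))
          simp [Dr, hne', hi]
      rw [hD, hw1 i]
      split_ifs <;> ring
    · by_cases hj2 : j = p2
      · subst hj2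
        rw [if_neg hj1, if_pos rfl]
        have hD : Dr n 3 3 (ρ i) (σ j) = if i = r2 then -1 else 1 := by
          rw [hσ2]
          by_cases hi : i = r2
          · subst hi
            rw [hρ2]
            simp [Dr]
          · have hne : ρ i ≠ 1 := fun h => hi (ρ.injective (h.trans hρ2.symm))
            have hne' : ((ρ i : ℕ)) ≠ 1 := fun h => hne (Fin.ext (by simpa using h))
            simp [Dr, hne', hi]
        rw [hD, hw2 i]
        split_ifs <;> ring
      · by_cases hj3 : j = p3
        · subst hj3
          rw [if_neg hj1, if_neg hj2, if_pos rfl]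
          have hD : Dr n 3 3 (ρ i) (σ j) = if i = r3 then -1 else 1 := by
            rw [hσ3]
            by_cases hi : i = r3
            · subst hi
              rw [hρ3]
              simp [Dr]
            · have hne : ρ i ≠ 2 := fun h => hi (ρ.injective (h.trans hρ3.symm))
              have hne' : ((ρ i : ℕ)) ≠ 2 := fun h => hne (Fin.ext (by simpa using h))
              simp [Dr, hne', hi]
          rw [hD, hw3 i]
          split_ifs <;> ring
        · rw [if_neg hj1, if_neg hj2, if_neg hj3]
          have hs1 : σ j ≠ ⟨0, h0n⟩ := fun h => hj1 (σ.injective (h.trans hσ1.symm))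
          have hs2 : σ j ≠ ⟨1, h1n⟩ := fun h => hj2 (σ.injective (h.trans hσ2.symm))
          have hs3 : σ j ≠ ⟨2, h2n⟩ := fun h => hj3 (σ.injective (h.trans hσ3.symm))
          have hv1 : ((σ j : ℕ)) ≠ 0 := fun h => hs1 (Fin.ext (by simpa using h))
          have hv2 : ((σ j : ℕ)) ≠ 1 := fun h => hs2 (Fin.ext (by simpa using h))
          have hv3 : ((σ j : ℕ)) ≠ 2 := fun h => hs3 (Fin.ext (by simpa using h))
          have hD : Dr n 3 3 (ρ i) (σ j) = 1 := by
            have : ¬ ((σ j : ℕ) < 3) := by omega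
            simp [Dr, this]
          rw [hD]
          rcases hgen j hj1 hj2 hj3 with hsim | hsim
          · have e0 : A 0 j = A 0 j0 := hsim 0
            have hsi : A i j = A i j0 := hsim i
            rw [hsi, e0]
            rcases hε 0 with h | h <;> rw [h] <;> ring
          · have e0 : A 0 j = -A 0 j0 := hsim 0
            have hsi : A i j = -A i j0 := hsim i
            rw [hsi, e0]
            rcases hε 0 with h | h <;> rw [h] <;> ring


lemma chooseEqThree (a b c n : ℕ) (ha : 0 < a) (hb : 0 < b) (hc : 0 < c)
    (hs : a + b + c = n) (hn : 4 ≤ n)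
    (heq : a.choose 3 + b.choose 3 + c.choose 3 = (n - 2).choose 3) :
    (a = n - 2 ∧ b = 1 ∧ c = 1) ∨ (b = n - 2 ∧ a = 1 ∧ c = 1)
      ∨ (c = n - 2 ∧ a = 1 ∧ b = 1) := by
  by_cases h4 : n = 4
  · subst h4
    omega
  · have hn5 : 5 ≤ n := by omega
    have h := sumChooseEq a b c 0 n ha hb hc (by omega) hn5
      (by have h03 : Nat.choose 0 3 = 0 := rfl; rw [h03]; omega)
    rcases h.2 with ⟨h1, h2⟩ | ⟨h1, h2⟩ | ⟨h1, h2⟩ <;> omega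

lemma natEqCase (a b c d n : ℕ) (hs : a + b + c + d = n) (hn : 4 ≤ n)
    (hpos : (0 < a ∧ 0 < b ∧ 0 < c) ∨ (0 < a ∧ 0 < b ∧ 0 < d)
      ∨ (0 < a ∧ 0 < c ∧ 0 < d) ∨ (0 < b ∧ 0 < c ∧ 0 < d))
    (heq : a.choose 3 + b.choose 3 + c.choose 3 + d.choose 3 = (n - 2).choose 3) :
    (n = 4 ∧ a = 1 ∧ b = 1 ∧ c = 1 ∧ d = 1) ∨
    (d = 0 ∧ ((a = n-2 ∧ b = 1 ∧ c = 1) ∨ (b = n-2 ∧ a = 1 ∧ c = 1) ∨ (c = n-2 ∧ a = 1 ∧ b = 1))) ∨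
    (c = 0 ∧ ((a = n-2 ∧ b = 1 ∧ d = 1) ∨ (b = n-2 ∧ a = 1 ∧ d = 1) ∨ (d = n-2 ∧ a = 1 ∧ b = 1))) ∨
    (b = 0 ∧ ((a = n-2 ∧ c = 1 ∧ d = 1) ∨ (c = n-2 ∧ a = 1 ∧ d = 1) ∨ (d = n-2 ∧ a = 1 ∧ c = 1))) ∨
    (a = 0 ∧ ((b = n-2 ∧ c = 1 ∧ d = 1) ∨ (c = n-2 ∧ b = 1 ∧ d = 1) ∨ (d = n-2 ∧ b = 1 ∧ c = 1))) := by
  have h03 : Nat.choose 0 3 = 0 := rfl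
  by_cases hd0 : d = 0
  · refine Or.inr (Or.inl ⟨hd0, ?_⟩)
    refine chooseEqThree a b c n (by omega) (by omega) (by omega) (by omega) hn ?_
    rw [hd0, h03] at heq
    omega
  · by_cases hc0 : c = 0
    · refine Or.inr (Or.inr (Or.inl ⟨hc0, ?_⟩))
      refine chooseEqThree a b d n (by omega) (by omega) (by omega) (by omega) hn ?_
      rw [hc0, h03] at heq
      omega
    · by_cases hb0 : b = 0
      · refine Or.inr (Or.inr (Or.inr (Or.inl ⟨hb0, ?_⟩)))
        refine chooseEqThree a c d n (by omega) (by omega) (by omega) (by omega) hn ?_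
        rw [hb0, h03] at heq
        omega
      · by_cases ha0 : a = 0
        · refine Or.inr (Or.inr (Or.inr (Or.inr ⟨ha0, ?_⟩)))
          refine chooseEqThree b c d n (by omega) (by omega) (by omega) (by omega) hn ?_
          rw [ha0, h03] at heq
          omega
        · by_cases h4 : n = 4
          · exact Or.inl ⟨h4, by omega⟩
          · exfalso
            have h := sumChooseEq a b c d n (by omega) (by omega) (by omega) hs (by omega) heq
            omega

lemma natLeCase (a b c d n : ℕ) (hs : a + b + c + d = n) (hn : 4 ≤ n)
    (hpos : (0 < a ∧ 0 < b ∧ 0 < c) ∨ (0 < a ∧ 0 < b ∧ 0 < d)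
      ∨ (0 < a ∧ 0 < c ∧ 0 < d) ∨ (0 < b ∧ 0 < c ∧ 0 < d)) :
    a.choose 3 + b.choose 3 + c.choose 3 + d.choose 3 ≤ (n - 2).choose 3 := by
  rcases hpos with ⟨h1, h2, h3⟩ | ⟨h1, h2, h3⟩ | ⟨h1, h2, h3⟩ | ⟨h1, h2, h3⟩
  · exact sumChooseLe a b c d n h1 h2 h3 hs hn
  · have := sumChooseLe a b d c n h1 h2 h3 (by omega) hn
    linarith
  · have := sumChooseLe a c d b n h1 h2 h3 (by omega) hn
    linarith
  · have := sumChooseLe b c d a n h1 h2 h3 (by omega) hn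
    linarith

lemma ctau_Dr33 (j : Fin 4) :
    ctau (Dr 4 3 3) j = if (j : ℕ) = 0 then (false, false)
      else if (j : ℕ) = 1 then (false, true)
      else if (j : ℕ) = 2 then (true, false) else (true, true) := by
  fin_cases j <;> simp [ctau, tau, Dr] <;> norm_num

lemma cnt_Dr33 (b : Bool × Bool) : cnt (Dr 4 3 3) b = 1 := by
  unfold cnt
  rcases b with ⟨b1, b2⟩
  rcases b1 <;> rcases b2
  · have hiff : ∀ j : Fin 4, (ctau (Dr 4 3 3) j = (false, false)) ↔ (j : ℕ) = 0 := by
      intro j; rw [ctau_Dr33]; split_ifs <;> simp <;> omega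
    rw [Finset.filter_congr (fun j _ => hiff j)]
    exact card_val_eq 4 0 (by omega)
  · have hiff : ∀ j : Fin 4, (ctau (Dr 4 3 3) j = (false, true)) ↔ (j : ℕ) = 1 := by
      intro j; rw [ctau_Dr33]; split_ifs <;> simp <;> omega
    rw [Finset.filter_congr (fun j _ => hiff j)]
    exact card_val_eq 4 1 (by omega)
  · have hiff : ∀ j : Fin 4, (ctau (Dr 4 3 3) j = (true, false)) ↔ (j : ℕ) = 2 := by
      intro j; rw [ctau_Dr33]; split_ifs <;> simp <;> omega
    rw [Finset.filter_congr (fun j _ => hiff j)]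
    exact card_val_eq 4 2 (by omega)
  · have hiff : ∀ j : Fin 4, (ctau (Dr 4 3 3) j = (true, true)) ↔ 3 ≤ (j : ℕ) := by
      intro j
      rw [ctau_Dr33]
      split_ifs <;> (try simp) <;> omega
    rw [Finset.filter_congr (fun j _ => hiff j)]
    have : (Finset.univ.filter fun j : Fin 4 => 3 ≤ (j : ℕ))
        = Finset.univ.filter fun j : Fin 4 => (j : ℕ) = 3 := by
      apply Finset.filter_congr
      intro j _
      constructor <;> intro h <;> omega
    rw [this]
    exact card_val_eq 4 3 (by omega)

lemma mper_Dr33 : mper (Dr 4 3 3) = mper (Dr 4 3 2) := by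
  rw [mper_formula _ (Dr_pm 4 3 3), mper_Dr2 (by norm_num)]
  rw [sum_bb]
  simp only [cnt_Dr33]
  norm_num [show Nat.choose 1 3 = 0 from rfl, show Nat.choose 2 3 = 0 from rfl]


lemma sum_four (f : Bool × Bool → ℕ) (b0 b1 b2 b3 : Bool × Bool)
    (h01 : b0 ≠ b1) (h02 : b0 ≠ b2) (h03 : b0 ≠ b3)
    (h12 : b1 ≠ b2) (h13 : b1 ≠ b3) (h23 : b2 ≠ b3) :
    ∑ b : Bool × Bool, f b = f b0 + f b1 + f b2 + f b3 := by
  have hs : ({b0, b1, b2, b3} : Finset (Bool × Bool)) = Finset.univ := by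
    apply Finset.eq_univ_of_card
    rw [Finset.card_insert_of_notMem (by simp [h01, h02, h03]),
      Finset.card_insert_of_notMem (by simp [h12, h13]),
      Finset.card_insert_of_notMem (by simp [h23]), Finset.card_singleton]
    rfl
  rw [← hs, Finset.sum_insert (by simp [h01, h02, h03]),
    Finset.sum_insert (by simp [h12, h13]), Finset.sum_insert (by simp [h23]),
    Finset.sum_singleton]
  ring

lemma pattern_to_R2 {n : ℕ} (hn : 4 ≤ n) (A : Matrix (Fin 3) (Fin n) ℚ)
    (hA : ∀ i j, A i j = 1 ∨ A i j = -1) (b0 b1 b2 : Bool × Bool)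
    (h01 : b0 ≠ b1) (h02 : b0 ≠ b2) (h12 : b1 ≠ b2)
    (hc0 : cnt A b0 = n - 2) (hc1 : cnt A b1 = 1) (hc2 : cnt A b2 = 1) :
    RectEquiv A (Dr n 3 2) := by
  obtain ⟨p1, hp1⟩ := Finset.card_eq_one.mp hc1
  obtain ⟨p2, hp2⟩ := Finset.card_eq_one.mp hc2
  have hτ1 : ctau A p1 = b1 := by
    have hm : p1 ∈ Finset.filter (fun j => ctau A j = b1) Finset.univ := by
      rw [hp1]; exact Finset.mem_singleton_self p1
    exact (Finset.mem_filter.mp hm).2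
  have hτ2 : ctau A p2 = b2 := by
    have hm : p2 ∈ Finset.filter (fun j => ctau A j = b2) Finset.univ := by
      rw [hp2]; exact Finset.mem_singleton_self p2
    exact (Finset.mem_filter.mp hm).2
  have hup1 : ∀ j, ctau A j = b1 → j = p1 := fun j hj =>
    Finset.mem_singleton.mp (hp1 ▸ Finset.mem_filter.mpr ⟨Finset.mem_univ _, hj⟩)
  have hup2 : ∀ j, ctau A j = b2 → j = p2 := fun j hj =>
    Finset.mem_singleton.mp (hp2 ▸ Finset.mem_filter.mpr ⟨Finset.mem_univ _, hj⟩)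
  have hp12 : p1 ≠ p2 := by
    intro h
    apply h12
    rw [← hτ1, ← hτ2, h]
  have hfourth : ∀ x y z : Bool × Bool, x ≠ y → x ≠ z → y ≠ z →
      ∃ w, x ≠ w ∧ y ≠ w ∧ z ≠ w ∧ ∀ u : Bool × Bool, u = x ∨ u = y ∨ u = z ∨ u = w := by
    decide
  obtain ⟨b3, h03, h13, h23, hcover⟩ := hfourth b0 b1 b2 h01 h02 h12
  have hsum := cnt_sum A
  rw [sum_four (cnt A) b0 b1 b2 b3 h01 h02 h03 h12 h13 h23] at hsum
  have hc3 : cnt A b3 = 0 := by omega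
  have hgen : ∀ j, j ≠ p1 → j ≠ p2 → ctau A j = b0 := by
    intro j hj1 hj2
    rcases hcover (ctau A j) with h | h | h | h
    · exact h
    · exact absurd (hup1 j h) hj1
    · exact absurd (hup2 j h) hj2
    · have := cnt_pos A j
      rw [h, hc3] at this
      omega
  have hc0pos : 0 < cnt A b0 := by omega
  obtain ⟨j0, hj0mem⟩ := Finset.card_pos.mp
    (show 0 < (Finset.univ.filter (fun j => ctau A j = b0)).card from hc0pos)
  have hτ0 : ctau A j0 = b0 := (Finset.mem_filter.mp hj0mem).2
  refine construct_R2 hn A hA p1 p2 j0 hp12 ?_ ?_ ?_ ?_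
  · intro j hj1 hj2
    refine (tau_eq_iff _ _ (fun i => hA i j) (fun i => hA i j0)).mp ?_
    show ctau A j = ctau A j0
    rw [hgen j hj1 hj2, hτ0]
  · intro hs
    have h := (tau_eq_iff _ _ (fun i => hA i p1) (fun i => hA i j0)).mpr hs
    apply h01
    rw [← hτ0]
    rw [show ctau A p1 = ctau A j0 from h] at hτ1
    rw [hτ1]
  · intro hs
    have h := (tau_eq_iff _ _ (fun i => hA i p2) (fun i => hA i j0)).mpr hs
    apply h02
    rw [← hτ0]
    rw [show ctau A p2 = ctau A j0 from h] at hτ2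
    rw [hτ2]
  · intro hs
    have h := (tau_eq_iff _ _ (fun i => hA i p1) (fun i => hA i p2)).mpr hs
    apply h12
    rw [← hτ1, ← hτ2]
    exact h

lemma allones_to_R3 (A : Matrix (Fin 3) (Fin 4) ℚ)
    (hA : ∀ i j, A i j = 1 ∨ A i j = -1) (hall : ∀ b, cnt A b = 1) :
    RectEquiv A (Dr 4 3 3) := by
  obtain ⟨q0, hq0⟩ := Finset.card_eq_one.mp (hall (false, false))
  obtain ⟨q1, hq1⟩ := Finset.card_eq_one.mp (hall (false, true))
  obtain ⟨q2, hq2⟩ := Finset.card_eq_one.mp (hall (true, false))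
  obtain ⟨q3, hq3⟩ := Finset.card_eq_one.mp (hall (true, true))
  have hτ0 : ctau A q0 = (false, false) := by
    have hm : q0 ∈ Finset.filter (fun j => ctau A j = (false, false)) Finset.univ := by
      rw [hq0]; exact Finset.mem_singleton_self q0
    exact (Finset.mem_filter.mp hm).2
  have hτ1 : ctau A q1 = (false, true) := by
    have hm : q1 ∈ Finset.filter (fun j => ctau A j = (false, true)) Finset.univ := by
      rw [hq1]; exact Finset.mem_singleton_self q1
    exact (Finset.mem_filter.mp hm).2
  have hτ2 : ctau A q2 = (true, false) := by
    have hm : q2 ∈ Finset.filter (fun j => ctau A j = (true, false)) Finset.univ := by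
      rw [hq2]; exact Finset.mem_singleton_self q2
    exact (Finset.mem_filter.mp hm).2
  have hτ3 : ctau A q3 = (true, true) := by
    have hm : q3 ∈ Finset.filter (fun j => ctau A j = (true, true)) Finset.univ := by
      rw [hq3]; exact Finset.mem_singleton_self q3
    exact (Finset.mem_filter.mp hm).2
  have hup1 : ∀ j, ctau A j = (false, true) → j = q1 := fun j hj =>
    Finset.mem_singleton.mp (hq1 ▸ Finset.mem_filter.mpr ⟨Finset.mem_univ _, hj⟩)
  have hup2 : ∀ j, ctau A j = (true, false) → j = q2 := fun j hj =>
    Finset.mem_singleton.mp (hq2 ▸ Finset.mem_filter.mpr ⟨Finset.mem_univ _, hj⟩)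
  have hup3 : ∀ j, ctau A j = (true, true) → j = q3 := fun j hj =>
    Finset.mem_singleton.mp (hq3 ▸ Finset.mem_filter.mpr ⟨Finset.mem_univ _, hj⟩)
  have hne : ∀ (x y : Fin 4) (bx by' : Bool × Bool), ctau A x = bx → ctau A y = by' →
      bx ≠ by' → x ≠ y := by
    intro x y bx by' hx hy hb hxy
    apply hb
    rw [← hx, ← hy, hxy]
  have h12 : q1 ≠ q2 := hne _ _ _ _ hτ1 hτ2 (by decide)
  have h13 : q1 ≠ q3 := hne _ _ _ _ hτ1 hτ3 (by decide)
  have h23 : q2 ≠ q3 := hne _ _ _ _ hτ2 hτ3 (by decide)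
  have hcover : ∀ u : Bool × Bool, u = (false, false) ∨ u = (false, true)
      ∨ u = (true, false) ∨ u = (true, true) := by decide
  have hgen : ∀ j, j ≠ q1 → j ≠ q2 → j ≠ q3 → ctau A j = (false, false) := by
    intro j hj1 hj2 hj3
    rcases hcover (ctau A j) with h | h | h | h
    · exact h
    · exact absurd (hup1 j h) hj1
    · exact absurd (hup2 j h) hj2
    · exact absurd (hup3 j h) hj3
  have hnsim : ∀ (x y : Fin 4), ctau A x ≠ ctau A y →
      ¬ Sim (fun i => A i x) (fun i => A i y) := by
    intro x y hd hs
    exact hd ((tau_eq_iff _ _ (fun i => hA i x) (fun i => hA i y)).mpr hs)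
  refine construct_R3 (by norm_num) A hA q1 q2 q3 q0 h12 h13 h23 ?_ ?_ ?_ ?_ ?_ ?_ ?_
  · intro j hj1 hj2 hj3
    refine (tau_eq_iff _ _ (fun i => hA i j) (fun i => hA i q0)).mp ?_
    show ctau A j = ctau A q0
    rw [hgen j hj1 hj2 hj3, hτ0]
  · exact hnsim _ _ (by rw [hτ1, hτ0]; decide)
  · exact hnsim _ _ (by rw [hτ2, hτ0]; decide)
  · exact hnsim _ _ (by rw [hτ3, hτ0]; decide)
  · exact hnsim _ _ (by rw [hτ1, hτ2]; decide)
  · exact hnsim _ _ (by rw [hτ1, hτ3]; decide)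
  · exact hnsim _ _ (by rw [hτ2, hτ3]; decide)

theorem mper_bound_three_rows (n : ℕ) (hn : 4 ≤ n)
    (A : Matrix (Fin 3) (Fin n) ℚ) (hA : ∀ i j, A i j = 1 ∨ A i j = -1)
    (hrk : A.rank = 3) :
    mper A ≤ mper (Dr n 3 2) ∧
      (5 ≤ n → (mper A = mper (Dr n 3 2) ↔ RectEquiv A (Dr n 3 2))) ∧
      (n = 4 → (mper A = mper (Dr n 3 2) ↔
        RectEquiv A (Dr n 3 2) ∨ RectEquiv A (Dr n 3 3))) := by
  classical
  have hAform := mper_formula A hA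
  have hDform := mper_Dr2 hn
  rw [sum_bb] at hAform
  have hsum : cnt A (false, false) + cnt A (false, true) + cnt A (true, false)
      + cnt A (true, true) = n := by
    have h := cnt_sum A
    rw [sum_bb] at h
    exact h
  have hzero : ∀ x y : Bool × Bool, x ≠ y → cnt A x = 0 → cnt A y = 0 → False := by
    intro x y hne hx hy
    have hfx : ∀ j, ctau A j ≠ x := by
      intro j hj
      have h := cnt_pos A j
      rw [hj, hx] at h
      omega
    have hfy : ∀ j, ctau A j ≠ y := by
      intro j hj
      have h := cnt_pos A j
      rw [hj, hy] at h
      omega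
    have h := rank_le_two_of_two_missing A hA x y hne hfx hfy
    omega
  have hpos : (0 < cnt A (false, false) ∧ 0 < cnt A (false, true) ∧ 0 < cnt A (true, false))
      ∨ (0 < cnt A (false, false) ∧ 0 < cnt A (false, true) ∧ 0 < cnt A (true, true))
      ∨ (0 < cnt A (false, false) ∧ 0 < cnt A (true, false) ∧ 0 < cnt A (true, true))
      ∨ (0 < cnt A (false, true) ∧ 0 < cnt A (true, false) ∧ 0 < cnt A (true, true)) := by
    have z1 : ¬(cnt A (false, false) = 0 ∧ cnt A (false, true) = 0) :=
      fun ⟨u, v⟩ => hzero _ _ (by decide) u v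
    have z2 : ¬(cnt A (false, false) = 0 ∧ cnt A (true, false) = 0) :=
      fun ⟨u, v⟩ => hzero _ _ (by decide) u v
    have z3 : ¬(cnt A (false, false) = 0 ∧ cnt A (true, true) = 0) :=
      fun ⟨u, v⟩ => hzero _ _ (by decide) u v
    have z4 : ¬(cnt A (false, true) = 0 ∧ cnt A (true, false) = 0) :=
      fun ⟨u, v⟩ => hzero _ _ (by decide) u v
    have z5 : ¬(cnt A (false, true) = 0 ∧ cnt A (true, true) = 0) :=
      fun ⟨u, v⟩ => hzero _ _ (by decide) u v
    have z6 : ¬(cnt A (true, false) = 0 ∧ cnt A (true, true) = 0) :=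
      fun ⟨u, v⟩ => hzero _ _ (by decide) u v
    omega
  have hSle : (cnt A (false, false)).choose 3 + (cnt A (false, true)).choose 3
      + (cnt A (true, false)).choose 3 + (cnt A (true, true)).choose 3
      ≤ (n - 2).choose 3 := natLeCase _ _ _ _ n hsum hn hpos
  have doR2 : ∀ b0 b1 b2 : Bool × Bool, b0 ≠ b1 → b0 ≠ b2 → b1 ≠ b2 →
      cnt A b0 = n - 2 → cnt A b1 = 1 → cnt A b2 = 1 → RectEquiv A (Dr n 3 2) :=
    fun b0 b1 b2 => pattern_to_R2 hn A hA b0 b1 b2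
  have main_eq : mper A = mper (Dr n 3 2) →
      RectEquiv A (Dr n 3 2) ∨ (n = 4 ∧ RectEquiv A (Dr n 3 3)) := by
    intro heq
    rw [hAform, hDform] at heq
    have hnat : (cnt A (false, false)).choose 3 + (cnt A (false, true)).choose 3
        + (cnt A (true, false)).choose 3 + (cnt A (true, true)).choose 3
        = (n - 2).choose 3 := by
      have hq : (((cnt A (false, false)).choose 3 + (cnt A (false, true)).choose 3
          + (cnt A (true, false)).choose 3 + (cnt A (true, true)).choose 3 : ℕ) : ℚ)
          = (((n - 2).choose 3 : ℕ) : ℚ) := by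
        push_cast
        push_cast at heq
        linarith
      exact_mod_cast hq
    rcases natEqCase _ _ _ _ n hsum hn hpos hnat with
      ⟨h4, ha, hb, hc, hd⟩ | ⟨hz, ⟨x1, x2, x3⟩ | ⟨x1, x2, x3⟩ | ⟨x1, x2, x3⟩⟩ |
      ⟨hz, ⟨x1, x2, x3⟩ | ⟨x1, x2, x3⟩ | ⟨x1, x2, x3⟩⟩ |
      ⟨hz, ⟨x1, x2, x3⟩ | ⟨x1, x2, x3⟩ | ⟨x1, x2, x3⟩⟩ |
      ⟨hz, ⟨x1, x2, x3⟩ | ⟨x1, x2, x3⟩ | ⟨x1, x2, x3⟩⟩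
    · subst h4
      refine Or.inr ⟨rfl, allones_to_R3 A hA ?_⟩
      intro b
      rcases b with ⟨u, v⟩
      rcases u <;> rcases v <;> assumption
    · exact Or.inl (doR2 (false, false) (false, true) (true, false)
        (by decide) (by decide) (by decide) x1 x2 x3)
    · exact Or.inl (doR2 (false, true) (false, false) (true, false)
        (by decide) (by decide) (by decide) x1 x2 x3)
    · exact Or.inl (doR2 (true, false) (false, false) (false, true)
        (by decide) (by decide) (by decide) x1 x2 x3)
    · exact Or.inl (doR2 (false, false) (false, true) (true, true)
        (by decide) (by decide) (by decide) x1 x2 x3)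
    · exact Or.inl (doR2 (false, true) (false, false) (true, true)
        (by decide) (by decide) (by decide) x1 x2 x3)
    · exact Or.inl (doR2 (true, true) (false, false) (false, true)
        (by decide) (by decide) (by decide) x1 x2 x3)
    · exact Or.inl (doR2 (false, false) (true, false) (true, true)
        (by decide) (by decide) (by decide) x1 x2 x3)
    · exact Or.inl (doR2 (true, false) (false, false) (true, true)
        (by decide) (by decide) (by decide) x1 x2 x3)
    · exact Or.inl (doR2 (true, true) (false, false) (true, false)
        (by decide) (by decide) (by decide) x1 x2 x3)
    · exact Or.inl (doR2 (false, true) (true, false) (true, true)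
        (by decide) (by decide) (by decide) x1 x2 x3)
    · exact Or.inl (doR2 (true, false) (false, true) (true, true)
        (by decide) (by decide) (by decide) x1 x2 x3)
    · exact Or.inl (doR2 (true, true) (false, true) (true, false)
        (by decide) (by decide) (by decide) x1 x2 x3)
  refine ⟨?_, ?_, ?_⟩
  · rw [hAform, hDform]
    have hcast : (((cnt A (false, false)).choose 3 + (cnt A (false, true)).choose 3
        + (cnt A (true, false)).choose 3 + (cnt A (true, true)).choose 3 : ℕ) : ℚ)
        ≤ (((n - 2).choose 3 : ℕ) : ℚ) := by exact_mod_cast hSle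
    push_cast at hcast ⊢
    linarith
  · intro hn5
    constructor
    · intro heq
      rcases main_eq heq with h | ⟨h4, _⟩
      · exact h
      · omega
    · rintro ⟨ρ, σ, ε, δ, hε, hδ, hfm⟩
      exact mper_rectequiv A (Dr n 3 2) ρ σ ε δ hε hδ hfm
  · intro h4
    subst h4
    constructor
    · intro heq
      rcases main_eq heq with h | ⟨_, h⟩
      · exact Or.inl h
      · exact Or.inr h
    · intro h
      rcases h with ⟨ρ, σ, ε, δ, hε, hδ, hfm⟩ | ⟨ρ, σ, ε, δ, hε, hδ, hfm⟩
      · exact mper_rectequiv A (Dr 4 3 2) ρ σ ε δ hε hδ hfm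
      · rw [mper_rectequiv A (Dr 4 3 3) ρ σ ε δ hε hδ hfm, mper_Dr33]
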